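/- Fix ε > 0 and K ≥ 2, and let W_{ε,⋆} be the step mechanism with diagonal entries e^ε/(e^ε+K−1) and off-diagonal entries 1/(e^ε+K−1). Then W_{ε,⋆} is invertible and: (i) [Φ(W_{ε,⋆})]_{k,ℓ} = (1/(e^ε−1)²)·[ (e^ε(e^ε+K−2)+1−e^ε)·δ_{k,ℓ} + (e^ε+K−2)·(1−δ_{k,ℓ}) ] for all k, ℓ; (ii) φ(W_{ε,⋆}) = (K/(e^ε−1)²)·[ (e^ε+K−1)(e^ε+K−2) + 1 − e^ε ]. -/

import Mathlib

open Finset Filter Asymptotics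

namespace RRStmt

def simplex (K : ℕ) : Set (Fin K → ℝ) :=
  {p | (∀ k, 0 ≤ p k) ∧ ∑ k, p k = 1}

def simplexBoundary (K : ℕ) : Set (Fin K → ℝ) :=
  {p | p ∈ simplex K ∧ ∃ k, p k = 0}

/-- Kullback–Leibler divergence between two vectors on `Fin K`. -/
noncomputable def KL {K : ℕ} (u v : Fin K → ℝ) : ℝ :=
  ∑ k, u k * Real.log (u k / v k)

/-- Boundary information projection `D(∂ℙW ‖ pW)`. -/
noncomputable def Dbnd {K : ℕ} (p : Fin K → ℝ) (W : Matrix (Fin K) (Fin K) ℝ) : ℝ :=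
  sInf ((fun r => KL (Matrix.vecMul r W) (Matrix.vecMul p W)) '' simplexBoundary K)

/-- Empirical distribution (type) of a sample sequence. -/
noncomputable def empDist {K n : ℕ} (y : Fin n → Fin K) : Fin K → ℝ :=
  fun k => ((Finset.univ.filter fun i => y i = k).card : ℝ) / n

/-- Expectation of `g` under `n` i.i.d. samples with distribution `q`. -/
noncomputable def iidE {K : ℕ} (q : Fin K → ℝ) (n : ℕ) (g : (Fin n → Fin K) → ℝ) : ℝ :=
  ∑ y : Fin n → Fin K, (∏ i, q (y i)) * g y

open Classical in
/-- Probability of event `E` under `n` i.i.d. samples with distribution `q`. -/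
noncomputable def iidP {K : ℕ} (q : Fin K → ℝ) (n : ℕ) (E : Set (Fin n → Fin K)) : ℝ :=
  ∑ y : Fin n → Fin K, if y ∈ E then ∏ i, q (y i) else 0

def RowStochastic {K : ℕ} (W : Matrix (Fin K) (Fin K) ℝ) : Prop :=
  (∀ i j, 0 ≤ W i j) ∧ ∀ i, ∑ j, W i j = 1

def EpsPrivate {K : ℕ} (ε : ℝ) (W : Matrix (Fin K) (Fin K) ℝ) : Prop :=
  ∀ k k' l, W k l ≤ Real.exp ε * W k' l

def IsCirculant {K : ℕ} (W : Matrix (Fin K) (Fin K) ℝ) : Prop :=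
  ∃ w : Fin K → ℝ, ∀ i j, W i j = w (j - i)

def IsPermMatrix {K : ℕ} (W : Matrix (Fin K) (Fin K) ℝ) : Prop :=
  ∃ σ : Equiv.Perm (Fin K), ∀ i j, W i j = if σ i = j then 1 else 0

noncomputable def nu {K : ℕ} (p : Fin K → ℝ) (W : Matrix (Fin K) (Fin K) ℝ)
    (ρ : ℕ) (k : Fin K) : ℝ :=
  ∑ j, Matrix.vecMul p W j * (W⁻¹ j k) ^ ρ

noncomputable def Phi {K : ℕ} (W : Matrix (Fin K) (Fin K) ℝ) : Matrix (Fin K) (Fin K) ℝ :=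
  W * Matrix.hadamard W⁻¹ W⁻¹

noncomputable def phiSum {K : ℕ} (W : Matrix (Fin K) (Fin K) ℝ) : ℝ :=
  ∑ k, ∑ l, Phi W k l

noncomputable def stepMech (K : ℕ) (ε : ℝ) : Matrix (Fin K) (Fin K) ℝ :=
  Matrix.of fun i j => if i = j then Real.exp ε / (Real.exp ε + K - 1)
                       else 1 / (Real.exp ε + K - 1)



private lemma sum_ite_single {K : ℕ} (i : Fin K) (X Y : ℝ) :
    ∑ j : Fin K, (if i = j then X else Y) = K * Y + (X - Y) := by
  have h : ∀ j : Fin K, (if i = j then X else Y)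
      = Y + (if j = i then X - Y else 0) := by
    intro j; by_cases h1 : i = j <;> simp [h1, eq_comm] <;> ring
  simp only [h, Finset.sum_add_distrib, Finset.sum_const, Finset.card_univ,
    Fintype.card_fin, nsmul_eq_mul, Finset.sum_ite_eq', Finset.mem_univ, if_true]

private lemma sum_two_ite_ne {K : ℕ} {i l : Fin K} (hil : i ≠ l) (A B C D : ℝ) :
    ∑ j : Fin K, (if i = j then A else B) * (if j = l then C else D)
      = K * (B * D) + (A * D - B * D) + (B * C - B * D) := by
  have h : ∀ j : Fin K, (if i = j then A else B) * (if j = l then C else D)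
      = B * D + (if j = i then A * D - B * D else 0)
        + (if j = l then B * C - B * D else 0) := by
    intro j
    by_cases h1 : i = j
    · subst h1
      have h2 : ¬ i = l := hil
      simp only [if_pos rfl, if_neg h2, if_true]
      ring
    · have h1' : ¬ j = i := fun h => h1 h.symm
      by_cases h2 : j = l
      · subst h2
        simp only [if_neg h1, if_pos rfl, if_neg h1', if_true]
        ring
      · simp only [if_neg h1, if_neg h2, if_neg h1']
        ring
  simp only [h, Finset.sum_add_distrib, Finset.sum_const, Finset.card_univ,
    Fintype.card_fin, nsmul_eq_mul, Finset.sum_ite_eq', Finset.mem_univ, if_true]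

private lemma sum_two_ite_eq {K : ℕ} (i : Fin K) (A B C D : ℝ) :
    ∑ j : Fin K, (if i = j then A else B) * (if j = i then C else D)
      = K * (B * D) + (A * C - B * D) := by
  have h : ∀ j : Fin K, (if i = j then A else B) * (if j = i then C else D)
      = B * D + (if j = i then A * C - B * D else 0) := by
    intro j; by_cases h1 : i = j <;> simp [h1, eq_comm] <;> ring
  simp only [h, Finset.sum_add_distrib, Finset.sum_const, Finset.card_univ,
    Fintype.card_fin, nsmul_eq_mul, Finset.sum_ite_eq', Finset.mem_univ, if_true]


private lemma ite_mul_ite_same (P : Prop) [Decidable P] (a b : ℝ) :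
    (if P then a else b) * (if P then a else b) = if P then a * a else b * b := by
  split_ifs <;> rfl

/-- closed forms of `Φ` and `φ` for the step mechanism. -/
theorem stmt_11 (K : ℕ) (hK : 2 ≤ K) (ε : ℝ) (hε : 0 < ε) :
    IsUnit (stepMech K ε) ∧
    (∀ k l, Phi (stepMech K ε) k l =
      1 / (Real.exp ε - 1) ^ 2 *
        (if k = l then Real.exp ε * (Real.exp ε + K - 2) + 1 - Real.exp ε
         else Real.exp ε + K - 2)) ∧
    phiSum (stepMech K ε) =
      K / (Real.exp ε - 1) ^ 2 *
        ((Real.exp ε + K - 1) * (Real.exp ε + K - 2) + 1 - Real.exp ε) := by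
  have hK2 : (2:ℝ) ≤ (K:ℝ) := by exact_mod_cast hK
  have he1 : 1 < Real.exp ε := by
    have := Real.exp_pos ε
    nlinarith [Real.add_one_le_exp ε]
  have hem1 : Real.exp ε - 1 ≠ 0 := by linarith
  have hs : Real.exp ε + (K:ℝ) - 1 ≠ 0 := by linarith
  set V : Matrix (Fin K) (Fin K) ℝ :=
    Matrix.of fun i j => if i = j then (Real.exp ε + (K:ℝ) - 2)/(Real.exp ε - 1)
      else -(1/(Real.exp ε - 1)) with hV
  have hWV : stepMech K ε * V = 1 := by
    ext i l
    rw [Matrix.mul_apply]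
    simp only [stepMech, hV, Matrix.of_apply, Matrix.one_apply]
    by_cases hil : i = l
    · subst hil
      rw [sum_two_ite_eq, if_pos rfl]
      field_simp
      ring
    · rw [sum_two_ite_ne hil, if_neg hil]
      field_simp
      ring
  have hinv : (stepMech K ε)⁻¹ = V := Matrix.inv_eq_right_inv hWV
  have hUnit : IsUnit (stepMech K ε) := by
    rw [Matrix.isUnit_iff_isUnit_det]
    exact IsUnit.of_mul_eq_one _ (by rw [← Matrix.det_mul, hWV, Matrix.det_one])
  have hPhi : ∀ k l, Phi (stepMech K ε) k l =
      1 / (Real.exp ε - 1) ^ 2 *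
        (if k = l then Real.exp ε * (Real.exp ε + K - 2) + 1 - Real.exp ε
         else Real.exp ε + K - 2) := by
    intro k l
    have hPhieq : Phi (stepMech K ε) = stepMech K ε * Matrix.hadamard V V := by
      rw [Phi, hinv]
    rw [hPhieq, Matrix.mul_apply]
    simp only [Matrix.hadamard_apply, hV, Matrix.of_apply, stepMech,
      ite_mul_ite_same]
    by_cases hkl : k = l
    · subst hkl
      rw [sum_two_ite_eq, if_pos rfl]
      field_simp
      ring
    · rw [sum_two_ite_ne hkl, if_neg hkl]
      field_simp
      ring
  refine ⟨hUnit, hPhi, ?_⟩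
  rw [phiSum]
  have hrow : ∀ k : Fin K, ∑ l, Phi (stepMech K ε) k l =
      (K:ℝ) * (1 / (Real.exp ε - 1) ^ 2 * (Real.exp ε + K - 2))
        + (1 / (Real.exp ε - 1) ^ 2 *
            (Real.exp ε * (Real.exp ε + K - 2) + 1 - Real.exp ε)
          - 1 / (Real.exp ε - 1) ^ 2 * (Real.exp ε + K - 2)) := by
    intro k
    rw [Finset.sum_congr rfl (fun l _ => hPhi k l)]
    simp only [mul_ite]
    exact sum_ite_single k _ _
  rw [Finset.sum_congr rfl (fun k _ => hrow k), Finset.sum_const,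
    Finset.card_univ, Fintype.card_fin, nsmul_eq_mul]
  field_simp
  ring_nf

end RRStmt
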